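/- The set S_n(3-1̄-42) of permutations of {1,…,n} avoiding the barred pattern 3-1̄-42 is exactly the set of reverse patience words of pile configurations of permutations: S_n(3-1̄-42) = {RPW(R(σ)) : σ ∈ S_n}; equivalently, a permutation σ avoids 3-1̄-42 if and only if σ = RPW(R(σ)). -/

import Mathlib

/-- One step of Patience Sorting: place card `c` on the leftmost pile whose top
(head) is larger than `c`, or start a new pile on the right.  Piles are stored
top-first, so each pile is an increasing list whose head is the top (smallest) card. -/
def PSinsert (c : ℕ) : List (List ℕ) → List (List ℕ)
  | [] => [[c]]
  | [] :: ps => [] :: PSinsert c ps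
  | (x :: p) :: ps =>
      if c < x then (c :: x :: p) :: ps else (x :: p) :: PSinsert c ps

/-- The pile configuration `R(w)` produced by Patience Sorting applied to the word `w`. -/
def PSpiles (w : List ℕ) : List (List ℕ) :=
  w.foldl (fun ps c => PSinsert c ps) []

/-- The one-line word (with values `1,…,n`) of a permutation of `Fin n`. -/
def permWord {n : ℕ} (σ : Equiv.Perm (Fin n)) : List ℕ :=
  List.ofFn fun i => (σ i : ℕ) + 1

/-- `AvoidsBarred σ`: the permutation avoids the barred pattern 3-1̄-42, i.e., every
occurrence of 2-31 (0-based positions `i < j` with `w(j+1) < w(i) < w(j)`, where `w` is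
the one-line word of `σ`) is contained in an occurrence of 3-1-42 (there is `k` with
`i < k < j` and `w(k) < w(j+1)`). -/
def AvoidsBarred {n : ℕ} (σ : Equiv.Perm (Fin n)) : Prop :=
  ∀ i j : ℕ, i < j → j + 1 < n →
    (permWord σ).getD (j + 1) 0 < (permWord σ).getD i 0 →
    (permWord σ).getD i 0 < (permWord σ).getD j 0 →
    ∃ k, i < k ∧ k < j ∧ (permWord σ).getD k 0 < (permWord σ).getD (j + 1) 0

/-- The reverse patience word of a pile configuration: concatenate the piles
left to right, each pile written in decreasing order (bottom to top). -/
def RPW (P : List (List ℕ)) : List ℕ := (P.map List.reverse).flatten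

/-- The set `S_n(3-1̄-42)` of permutations avoiding the barred pattern
3-1̄-42 is exactly the set of reverse patience words of pile configurations of
permutations; equivalently, `σ` avoids 3-1̄-42 if and only if `σ = RPW(R(σ))`. -/
def PSInv (P : List (List ℕ)) : Prop :=
  (∀ p ∈ P, p ≠ []) ∧ (∀ p ∈ P, p.Pairwise (· < ·)) ∧
    (P.map (fun p => p.headD 0)).Pairwise (· < ·)

lemma headD_le_of_mem {p : List ℕ} (hp : p.Pairwise (· < ·)) {y : ℕ} (hy : y ∈ p) :
    p.headD 0 ≤ y := by
  cases p with
  | nil => simp at hy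
  | cons h t =>
    rw [List.headD_cons]
    rcases List.mem_cons.mp hy with rfl | hy
    · exact le_refl _
    · exact le_of_lt ((List.pairwise_cons.mp hp).1 y hy)

lemma psinsert_inv (c : ℕ) : ∀ P : List (List ℕ), PSInv P → (∀ y ∈ P.flatten, y ≠ c) →
    PSInv (PSinsert c P) ∧ ∀ y ∈ (PSinsert c P).flatten, y = c ∨ y ∈ P.flatten := by
  intro P
  induction P with
  | nil =>
    intro _ _
    constructor
    · refine ⟨?_, ?_, ?_⟩ <;> simp [PSinsert]
    · simp [PSinsert]
  | cons q ps ih =>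
    intro hInv hc
    obtain ⟨hne, hsort, hheads⟩ := hInv
    cases q with
    | nil => exact absurd rfl (hne [] (by simp))
    | cons x p =>
      rw [List.map_cons, List.headD_cons] at hheads
      obtain ⟨hxlt, hheads'⟩ := List.pairwise_cons.mp hheads
      by_cases hcx : c < x
      · constructor
        · refine ⟨?_, ?_, ?_⟩
          · intro r hr
            rw [PSinsert, if_pos hcx] at hr
            rcases List.mem_cons.mp hr with rfl | hr
            · simp
            · exact hne r (by simp [hr])
          · intro r hr
            rw [PSinsert, if_pos hcx] at hr
            rcases List.mem_cons.mp hr with rfl | hr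
            · have hxp := hsort (x :: p) (by simp)
              refine List.pairwise_cons.mpr ⟨?_, hxp⟩
              intro y hy
              rcases List.mem_cons.mp hy with rfl | hy
              · exact hcx
              · exact lt_trans hcx ((List.pairwise_cons.mp hxp).1 y hy)
            · exact hsort r (by simp [hr])
          · rw [PSinsert, if_pos hcx, List.map_cons, List.headD_cons]
            refine List.pairwise_cons.mpr ⟨?_, hheads'⟩
            intro h hh
            exact lt_trans hcx (hxlt h hh)
        · intro y hy
          rw [PSinsert, if_pos hcx, List.flatten_cons] at hy
          rcases List.mem_append.mp hy with h | h
          · rcases List.mem_cons.mp h with rfl | h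
            · exact Or.inl rfl
            · exact Or.inr (by rw [List.flatten_cons]; exact List.mem_append.mpr (Or.inl h))
          · exact Or.inr (by rw [List.flatten_cons]; exact List.mem_append.mpr (Or.inr h))
      · -- skip this pile
        have hxc : x < c := by
          have hx : x ≠ c := hc x (by simp)
          omega
        have hps : PSInv ps := ⟨fun r hr => hne r (by simp [hr]),
          fun r hr => hsort r (by simp [hr]), hheads'⟩
        have hcps : ∀ y ∈ ps.flatten, y ≠ c := fun y hy =>
          hc y (by rw [List.flatten_cons]; exact List.mem_append.mpr (Or.inr hy))
        obtain ⟨⟨ine, isort, iheads⟩, imem⟩ := ih hps hcps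
        have hxflat : ∀ y ∈ ps.flatten, x < y := by
          intro y hy
          obtain ⟨s, hs, hys⟩ := List.mem_flatten.mp hy
          have h1 : x < s.headD 0 := hxlt _ (List.mem_map_of_mem hs)
          have h2 : s.headD 0 ≤ y := headD_le_of_mem (hsort s (by simp [hs])) hys
          omega
        have key : ∀ r ∈ PSinsert c ps, x < r.headD 0 := by
          intro r hr
          have hrne : r ≠ [] := ine r hr
          obtain ⟨h0, t0, rfl⟩ := List.exists_cons_of_ne_nil hrne
          rw [List.headD_cons]
          have : h0 ∈ (PSinsert c ps).flatten :=
            List.mem_flatten.mpr ⟨h0 :: t0, hr, by simp⟩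
          rcases imem _ this with rfl | h
          · exact hxc
          · exact hxflat _ h
        have hrw : PSinsert c ((x :: p) :: ps) = (x :: p) :: PSinsert c ps := by
          rw [PSinsert, if_neg hcx]
        rw [hrw]
        constructor
        · refine ⟨?_, ?_, ?_⟩
          · intro r hr
            rcases List.mem_cons.mp hr with rfl | hr
            · simp
            · exact ine r hr
          · intro r hr
            rcases List.mem_cons.mp hr with rfl | hr
            · exact hsort _ (by simp)
            · exact isort r hr
          · rw [List.map_cons, List.headD_cons]
            refine List.pairwise_cons.mpr ⟨?_, iheads⟩
            intro h hh
            obtain ⟨r, hr, rfl⟩ := List.mem_map.mp hh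
            exact key r hr
        · intro y hy
          rw [List.flatten_cons] at hy
          rcases List.mem_append.mp hy with h | h
          · exact Or.inr (by rw [List.flatten_cons]; exact List.mem_append.mpr (Or.inl h))
          · rcases imem y h with h | h
            · exact Or.inl h
            · exact Or.inr (by rw [List.flatten_cons]; exact List.mem_append.mpr (Or.inr h))

lemma pspiles_inv_aux : ∀ (w : List ℕ) (P : List (List ℕ)), PSInv P →
    (∀ x ∈ P.flatten, x ∉ w) → w.Nodup →
    PSInv (w.foldl (fun ps c => PSinsert c ps) P) ∧
      ∀ y ∈ (w.foldl (fun ps c => PSinsert c ps) P).flatten, y ∈ P.flatten ∨ y ∈ w := by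
  intro w
  induction w with
  | nil => intro P h _ _; exact ⟨h, fun y hy => Or.inl hy⟩
  | cons c w ih =>
    intro P hP hdisj hnd
    have h1 := psinsert_inv c P hP (fun y hy => by
      intro h; subst h; exact hdisj y hy (by simp))
    have hdisj' : ∀ x ∈ (PSinsert c P).flatten, x ∉ w := by
      intro x hx
      rcases h1.2 x hx with rfl | h
      · exact (List.nodup_cons.mp hnd).1
      · intro hw; exact hdisj x h (by simp [hw])
    obtain ⟨h2, h3⟩ := ih (PSinsert c P) h1.1 hdisj' (List.nodup_cons.mp hnd).2
    refine ⟨h2, ?_⟩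
    intro y hy
    rcases h3 y hy with h | h
    · rcases h1.2 y h with rfl | h
      · right; simp
      · left; exact h
    · right; simp [h]

lemma pspiles_inv {w : List ℕ} (h : w.Nodup) : PSInv (PSpiles w) :=
  (pspiles_inv_aux w [] ⟨by simp, by simp, by simp⟩ (by simp) h).1

def AvoidsL (w : List ℕ) : Prop :=
  ∀ i j : ℕ, i < j → j + 1 < w.length →
    w.getD (j + 1) 0 < w.getD i 0 → w.getD i 0 < w.getD j 0 →
    ∃ k, i < k ∧ k < j ∧ w.getD k 0 < w.getD (j + 1) 0

lemma rpw_cons (q : List ℕ) (P : List (List ℕ)) : RPW (q :: P) = q.reverse ++ RPW P := by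
  simp [RPW]

lemma avoidsL_rpw : ∀ P, PSInv P → AvoidsL (RPW P) := by
  intro P
  induction P with
  | nil => intro _ i j hij hj h1 h2; simp [RPW] at hj
  | cons q P' ih =>
    intro hInv
    obtain ⟨hne, hsort, hheads⟩ := hInv
    have hq : q ≠ [] := hne q (by simp)
    have hqs : q.Pairwise (· < ·) := hsort q (by simp)
    obtain ⟨hqlt, hheads'⟩ := List.pairwise_cons.mp hheads
    have hP' : PSInv P' := ⟨fun r hr => hne r (by simp [hr]),
      fun r hr => hsort r (by simp [hr]), hheads'⟩
    set m := q.length with hm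
    have hm0 : 0 < m := List.length_pos_iff.mpr hq
    have hbig : ∀ y ∈ RPW P', q.headD 0 < y := by
      intro y hy
      obtain ⟨r, hr, hyr⟩ := List.mem_flatten.mp hy
      obtain ⟨p, hp, rfl⟩ := List.mem_map.mp hr
      have h1 : q.headD 0 < p.headD 0 := hqlt _ (List.mem_map_of_mem hp)
      have h2 : p.headD 0 ≤ y := headD_le_of_mem (hsort p (by simp [hp])) (List.mem_reverse.mp hyr)
      omega
    intro i j hij hj1 h1 h2
    rw [rpw_cons] at h1 h2 hj1 ⊢
    rw [List.length_append, List.length_reverse] at hj1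
    by_cases hjm : j < m
    · -- i < j < m : contradiction, q.reverse strictly decreasing
      exfalso
      have hi : i < q.reverse.length := by rw [List.length_reverse]; omega
      have hj : j < q.reverse.length := by rw [List.length_reverse]; omega
      rw [List.getD_append _ _ _ _ hi, List.getD_append _ _ _ _ hj] at h2
      have hrev : q.reverse.Pairwise (fun a b => b < a) := List.pairwise_reverse.mpr hqs
      have := List.pairwise_iff_get.mp hrev ⟨i, hi⟩ ⟨j, hj⟩ (by simpa using hij)
      rw [List.getD_eq_getElem _ _ hi, List.getD_eq_getElem _ _ hj] at h2
      simp only [List.get_eq_getElem] at this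
      omega
    · push_neg at hjm
      by_cases him : i < m
      · -- k = m - 1 works
        have hmem : (RPW P').getD (j + 1 - m) 0 ∈ RPW P' := by
          rw [List.getD_eq_getElem _ _ (by omega : j + 1 - m < (RPW P').length)]
          exact List.getElem_mem _
        have hj1v : (q.reverse ++ RPW P').getD (j + 1) 0 = (RPW P').getD (j + 1 - m) 0 := by
          rw [List.getD_append_right _ _ _ _ (by rw [List.length_reverse]; omega)]
          rw [List.length_reverse]
        have hkv : (q.reverse ++ RPW P').getD (m - 1) 0 = q.headD 0 := by
          rw [List.getD_append _ _ _ _ (by rw [List.length_reverse]; omega),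
            List.getD_eq_getElem _ _ (by rw [List.length_reverse]; omega)]
          rw [List.getElem_reverse]
          obtain ⟨h0, t0, rfl⟩ := List.exists_cons_of_ne_nil hq
          have hlen2 : m = t0.length + 1 := by rw [hm]; simp
          have hz : t0.length - (m - 1) = 0 := by omega
          simp [hz]
        have hbigj1 : q.headD 0 < (q.reverse ++ RPW P').getD (j + 1) 0 := by
          rw [hj1v]; exact hbig _ hmem
        have hine : i ≠ m - 1 := by
          intro h
          rw [h, hkv] at h1
          omega
        refine ⟨m - 1, by omega, by omega, ?_⟩
        rw [hkv]
        exact hbigj1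
      · -- all in RPW P'
        push_neg at him
        have e1 : ∀ l, m ≤ l → (q.reverse ++ RPW P').getD l 0 = (RPW P').getD (l - m) 0 := by
          intro l hl
          rw [List.getD_append_right _ _ _ _ (by rw [List.length_reverse]; omega),
            List.length_reverse]
        have hsub : j + 1 - m = (j - m) + 1 := by omega
        rw [e1 i him, e1 (j+1) (by omega), hsub] at h1
        rw [e1 i him, e1 j (by omega)] at h2
        obtain ⟨k', hk1, hk2, hk3⟩ := ih hP' (i - m) (j - m) (by omega) (by omega) h1 h2
        refine ⟨k' + m, by omega, by omega, ?_⟩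
        rw [e1 (k' + m) (by omega), e1 (j + 1) (by omega), hsub]
        simpa using hk3

def splitRun : List ℕ → List ℕ × List ℕ
  | [] => ([], [])
  | [a] => ([a], [])
  | a :: b :: l =>
      if b < a then (a :: (splitRun (b :: l)).1, (splitRun (b :: l)).2)
      else ([a], b :: l)

lemma splitRun_append : ∀ w : List ℕ, (splitRun w).1 ++ (splitRun w).2 = w := by
  intro w
  induction w with
  | nil => simp [splitRun]
  | cons a l ih =>
    cases l with
    | nil => simp [splitRun]
    | cons b l' =>
      by_cases h : b < a
      · simp only [splitRun, if_pos h]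
        simpa using ih
      · simp [splitRun, if_neg h]

lemma splitRun_head : ∀ (a : ℕ) (l : List ℕ), ∃ r, (splitRun (a :: l)).1 = a :: r := by
  intro a l
  cases l with
  | nil => exact ⟨[], rfl⟩
  | cons b l' =>
    by_cases h : b < a
    · exact ⟨(splitRun (b :: l')).1, by simp [splitRun, if_pos h]⟩
    · exact ⟨[], by simp [splitRun, if_neg h]⟩

lemma splitRun_le : ∀ (l : List ℕ) (a : ℕ), ∀ x ∈ (splitRun (a :: l)).1, x ≤ a := by
  intro l
  induction l with
  | nil => intro a x hx; simp [splitRun] at hx; omega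
  | cons b l' ih =>
    intro a x hx
    by_cases h : b < a
    · simp only [splitRun, if_pos h] at hx
      rcases List.mem_cons.mp hx with rfl | hx
      · exact le_refl _
      · exact le_trans (ih b x hx) (le_of_lt h)
    · simp [splitRun, if_neg h] at hx; omega

lemma splitRun_pairwise : ∀ (l : List ℕ) (a : ℕ),
    ((splitRun (a :: l)).1).Pairwise (fun x y => y < x) := by
  intro l
  induction l with
  | nil => intro a; simp [splitRun]
  | cons b l' ih =>
    intro a
    by_cases h : b < a
    · simp only [splitRun, if_pos h]
      refine List.pairwise_cons.mpr ⟨?_, ih b⟩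
      intro y hy
      exact lt_of_le_of_lt (splitRun_le l' b y hy) h
    · simp [splitRun, if_neg h]

lemma splitRun_boundary : ∀ (w : List ℕ) (b : ℕ) (t : List ℕ),
    (splitRun w).2 = b :: t → ((splitRun w).1).reverse.headD 0 ≤ b := by
  intro w
  induction w with
  | nil => intro b t h; simp [splitRun] at h
  | cons a l ih =>
    cases l with
    | nil => intro b t h; simp [splitRun] at h
    | cons b' l' =>
      intro b t h
      by_cases hlt : b' < a
      · simp only [splitRun, if_pos hlt] at h ⊢
        have := ih b t h
        obtain ⟨r, hr⟩ := splitRun_head b' l'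
        rw [hr] at this ⊢
        rw [List.reverse_cons, List.reverse_cons]
        rw [List.reverse_cons] at this
        cases hrr : r.reverse with
        | nil => simp [hrr] at this ⊢; omega
        | cons z zs => simp [hrr] at this ⊢; omega
      · simp only [splitRun, if_neg hlt] at h ⊢
        injection h with h1 h2
        subst h1
        simpa using le_of_not_gt hlt

lemma avoidsL_drop (d w₂ : List ℕ) (h : AvoidsL (d ++ w₂)) : AvoidsL w₂ := by
  intro i j hij hj1 h1 h2
  set md := d.length with hmd
  have e : ∀ l : ℕ, (d ++ w₂).getD (md + l) 0 = w₂.getD l 0 := by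
    intro l
    rw [List.getD_append_right _ _ _ _ (by omega)]
    congr 1
    omega
  have hlen : (d ++ w₂).length = md + w₂.length := by simp [hmd]
  have hadd : md + j + 1 = md + (j + 1) := by omega
  obtain ⟨k, hk1, hk2, hk3⟩ := h (md + i) (md + j) (by omega) (by omega)
    (by rw [hadd, e, e]; exact h1) (by rw [e, e]; exact h2)
  refine ⟨k - md, by omega, by omega, ?_⟩
  have : k = md + (k - md) := by omega
  rw [this, e] at hk3
  rw [hadd, e] at hk3
  exact hk3

lemma tail_gt (d w₂ : List ℕ) (hd : d ≠ []) (hpd : d.Pairwise (fun x y => y < x))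
    (hnd : (d ++ w₂).Nodup) (hav : AvoidsL (d ++ w₂))
    (hb : ∀ b t, w₂ = b :: t → d.reverse.headD 0 ≤ b) :
    ∀ x ∈ w₂, d.reverse.headD 0 < x := by
  intro x hx
  set w := d ++ w₂ with hw
  set md := d.length with hmd
  set m := d.reverse.headD 0 with hm
  have hdr : d.reverse ≠ [] := by simpa using hd
  have hrev : d.reverse.Pairwise (· < ·) := List.pairwise_reverse.mpr hpd
  obtain ⟨r0, rr, hr⟩ := List.exists_cons_of_ne_nil hdr
  have hm0 : m = r0 := by rw [hm, hr]; rfl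
  have hmem_d : ∀ y ∈ d, m ≤ y := by
    intro y hy
    have hyr : y ∈ d.reverse := List.mem_reverse.mpr hy
    rw [hr] at hyr hrev
    rw [hm0]
    rcases List.mem_cons.mp hyr with rfl | hyy
    · exact le_refl _
    · exact le_of_lt ((List.pairwise_cons.mp hrev).1 y hyy)
  have hm_mem : m ∈ d := List.mem_reverse.mp (by rw [hr, hm0]; simp)
  have hmd0 : 0 < md := by rw [hmd]; exact List.length_pos_iff.mpr hd
  -- value at position md - 1 is m
  have hd2 : d = rr.reverse ++ [r0] := by simpa using congrArg List.reverse hr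
  have hlrr : rr.reverse.length = md - 1 := by
    have h9 : md = d.length := hmd
    rw [hd2] at h9
    simp only [List.length_append, List.length_reverse, List.length_cons, List.length_nil] at h9
    simp only [List.length_reverse]
    omega
  have hgetm : w.getD (md - 1) 0 = m := by
    have e : w = rr.reverse ++ ([r0] ++ w₂) := by rw [hw, hd2, List.append_assoc]
    rw [e, List.getD_append_right _ _ _ _ (by omega)]
    have h9 : md - 1 - rr.reverse.length = 0 := by omega
    rw [h9, hm0]
    simp
  -- positions below md have values ≥ m
  have hbelow : ∀ l, l < md → m ≤ w.getD l 0 := by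
    intro l hl
    rw [hw, List.getD_append _ _ _ _ (by omega),
      List.getD_eq_getElem _ _ (by omega : l < d.length)]
    exact hmem_d _ (List.getElem_mem _)
  by_contra hcon
  push_neg at hcon
  have hxm : x ≠ m := by
    intro h
    subst h
    exact (List.disjoint_of_nodup_append hnd) hm_mem hx
  have hxlt : x < m := by omega
  obtain ⟨l', hl', hxe⟩ := List.getElem_of_mem hx
  have hwlen : w.length = md + w₂.length := by simp [hw, hmd]
  have hxw : w.getD (md + l') 0 = x := by
    rw [hw, List.getD_append_right _ _ _ _ (by omega)]
    have : md + l' - d.length = l' := by omega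
    rw [this, List.getD_eq_getElem _ _ hl', hxe]
  -- least position with value < m
  have hex : ∃ l, l < w.length ∧ w.getD l 0 < m := ⟨md + l', by omega, by rw [hxw]; omega⟩
  classical
  obtain ⟨j1, hj1spec, hminl⟩ :
      ∃ j1, (j1 < w.length ∧ w.getD j1 0 < m) ∧
        ∀ l, l < j1 → ¬(l < w.length ∧ w.getD l 0 < m) :=
    ⟨Nat.find hex, Nat.find_spec hex, fun l hl => Nat.find_min hex hl⟩
  obtain ⟨hj1len, hj1lt⟩ := hj1spec
  have hj1md : md < j1 := by
    by_contra hcon2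
    push_neg at hcon2
    rcases Nat.lt_or_ge j1 md with h2 | h2
    · have := hbelow j1 h2; omega
    · have hj1eq : j1 = md := by omega
      obtain ⟨b, t, hbt⟩ := List.exists_cons_of_ne_nil
        (show w₂ ≠ [] from by rintro rfl; simp at hx)
      have hbm : m ≤ b := hb b t hbt
      have hval : w.getD j1 0 = b := by
        rw [hw, List.getD_append_right _ _ _ _ (by omega)]
        have h3 : j1 - d.length = 0 := by omega
        rw [h3, hbt]; rfl
      omega
  have hje : j1 - 1 + 1 = j1 := by omega
  have hjlen : j1 - 1 < w.length := by omega
  have hjge : m < w.getD (j1 - 1) 0 := by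
    have hge : ¬(j1 - 1 < w.length ∧ w.getD (j1 - 1) 0 < m) := hminl _ (by omega)
    push_neg at hge
    have h4 : m ≤ w.getD (j1 - 1) 0 := hge hjlen
    have hne2 : w.getD (j1 - 1) 0 ≠ m := by
      intro he
      have eq2 : w[j1 - 1]'hjlen = w[md - 1]'(by omega) := by
        rw [← List.getD_eq_getElem _ 0 hjlen, ← List.getD_eq_getElem _ 0 (by omega), he, hgetm]
      have := (List.Nodup.getElem_inj_iff hnd).mp eq2
      omega
    omega
  obtain ⟨k, hk1, hk2, hk3⟩ := hav (md - 1) (j1 - 1) (by omega) (by omega)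
    (by rw [hje, hgetm]; exact hj1lt) (by rw [hgetm]; exact hjge)
  have hklt : ¬(k < w.length ∧ w.getD k 0 < m) := hminl k (by omega)
  push_neg at hklt
  have h5 := hklt (by omega)
  rw [hje] at hk3
  omega

lemma psinsert_top (c x : ℕ) (p : List ℕ) (h : c < x) :
    PSinsert c [x :: p] = [c :: x :: p] := by
  rw [PSinsert, if_pos h]

lemma psinsert_skip (c h : ℕ) (t : List ℕ) (R : List (List ℕ)) (hh : h < c) :
    PSinsert c ((h :: t) :: R) = (h :: t) :: PSinsert c R := by
  rw [PSinsert, if_neg (by omega)]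

lemma foldl_run : ∀ (d : List ℕ) (x : ℕ) (p : List ℕ),
    (∀ a ∈ d, a < x) → d.Pairwise (fun a b => b < a) →
    List.foldl (fun ps c => PSinsert c ps) [x :: p] d = [d.reverse ++ x :: p] := by
  intro d
  induction d with
  | nil => intro x p _ _; simp
  | cons c d' ih =>
    intro x p hlt hpw
    have hcx : c < x := hlt c (by simp)
    rw [List.foldl_cons, psinsert_top c x p hcx]
    rw [ih c (x :: p) (fun a ha => (List.pairwise_cons.mp hpw).1 a ha)
      (List.pairwise_cons.mp hpw).2]
    simp

lemma pspiles_run (d : List ℕ) (hd : d ≠ []) (hp : d.Pairwise (fun a b => b < a)) :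
    PSpiles d = [d.reverse] := by
  obtain ⟨a, d', rfl⟩ := List.exists_cons_of_ne_nil hd
  show List.foldl _ _ _ = _
  rw [List.foldl_cons]
  have h0 : PSinsert a [] = [[a]] := rfl
  rw [h0]
  have : ([a] : List ℕ) = a :: [] := rfl
  rw [this, foldl_run d' a [] (fun b hb => (List.pairwise_cons.mp hp).1 b hb)
    (List.pairwise_cons.mp hp).2]
  simp

lemma foldl_skip : ∀ (l : List ℕ) (R : List (List ℕ)) (h : ℕ) (t : List ℕ),
    (∀ c ∈ l, h < c) →
    List.foldl (fun ps c => PSinsert c ps) ((h :: t) :: R) l =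
      (h :: t) :: List.foldl (fun ps c => PSinsert c ps) R l := by
  intro l
  induction l with
  | nil => intro R h t _; simp
  | cons c l' ih =>
    intro R h t hlt
    rw [List.foldl_cons, psinsert_skip c h t R (hlt c (by simp)), List.foldl_cons]
    exact ih _ h t (fun a ha => hlt a (by simp [ha]))

lemma rpw_pspiles : ∀ (N : ℕ) (w : List ℕ), w.length ≤ N → w.Nodup → AvoidsL w →
    RPW (PSpiles w) = w := by
  intro N
  induction N with
  | zero =>
    intro w hw _ _
    have : w = [] := List.eq_nil_of_length_eq_zero (by omega)
    subst this
    rfl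
  | succ N ih =>
    intro w hw hnd hav
    cases hwe : w with
    | nil => subst hwe; rfl
    | cons a l =>
      subst hwe
      obtain ⟨r, hr⟩ := splitRun_head a l
      set d := (splitRun (a :: l)).1 with hd
      set w₂ := (splitRun (a :: l)).2 with hw₂
      have hsplit : d ++ w₂ = a :: l := splitRun_append (a :: l)
      have hdne : d ≠ [] := by rw [hr]; simp
      have hpd : d.Pairwise (fun x y => y < x) := splitRun_pairwise l a
      have hnd' : (d ++ w₂).Nodup := by rw [hsplit]; exact hnd
      have hav' : AvoidsL (d ++ w₂) := by rw [hsplit]; exact hav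
      have hb : ∀ b t, w₂ = b :: t → d.reverse.headD 0 ≤ b := by
        intro b t hbt
        have hbmem : b ∈ w₂ := by rw [hbt]; simp
        have := splitRun_boundary (a :: l) b t hbt
        -- boundary gives ≤, strict from nodup
        exact this
      have hgt : ∀ x ∈ w₂, d.reverse.headD 0 < x :=
        tail_gt d w₂ hdne hpd hnd' hav' hb
      have hdr : d.reverse ≠ [] := by simpa using hdne
      obtain ⟨m, rr, hmr⟩ := List.exists_cons_of_ne_nil hdr
      have hmhd : d.reverse.headD 0 = m := by rw [hmr]; rfl
      -- compute PSpiles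
      have hps : PSpiles (a :: l) = d.reverse :: PSpiles w₂ := by
        have e1 : PSpiles (a :: l) = List.foldl (fun ps c => PSinsert c ps) (PSpiles d) w₂ := by
          rw [show (a :: l) = d ++ w₂ from hsplit.symm]
          exact List.foldl_append
        rw [e1, pspiles_run d hdne hpd, hmr]
        rw [foldl_skip w₂ [] m rr (fun c hc => by rw [← hmhd]; exact hgt c hc)]
        rfl
      have hlen2 : w₂.length ≤ N := by
        have h1 : d.length + w₂.length = (a :: l).length := by
          rw [← hsplit]; simp
        have h2 : 0 < d.length := List.length_pos_iff.mpr hdne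
        simp at h1
        have h3 : l.length + 1 ≤ N + 1 := by simpa using hw
        omega
      have hnd2 : w₂.Nodup := (List.nodup_append.mp hnd').2.1
      have hav2 : AvoidsL w₂ := avoidsL_drop d w₂ hav'
      rw [hps, rpw_cons, List.reverse_reverse, ih w₂ hlen2 hnd2 hav2, hsplit]

lemma permWord_nodup {n : ℕ} (σ : Equiv.Perm (Fin n)) : (permWord σ).Nodup := by
  rw [permWord, List.nodup_ofFn]
  intro a b h
  simp only at h
  have : σ a = σ b := by
    have := Nat.add_right_cancel h
    exact Fin.ext this
  exact σ.injective this

lemma permWord_length {n : ℕ} (σ : Equiv.Perm (Fin n)) : (permWord σ).length = n := by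
  simp [permWord]

lemma avoids_iff {n : ℕ} (σ : Equiv.Perm (Fin n)) :
    AvoidsBarred σ ↔ AvoidsL (permWord σ) := by
  unfold AvoidsBarred AvoidsL
  rw [permWord_length]


theorem stmt14 (n : ℕ) (σ : Equiv.Perm (Fin n)) :
    (AvoidsBarred σ ↔
      ∃ τ : Equiv.Perm (Fin n), permWord σ = RPW (PSpiles (permWord τ))) ∧
    (AvoidsBarred σ ↔ permWord σ = RPW (PSpiles (permWord σ))) := by
  have hfix : AvoidsBarred σ ↔ permWord σ = RPW (PSpiles (permWord σ)) := by
    constructor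
    · intro h
      exact (rpw_pspiles (permWord σ).length (permWord σ) le_rfl (permWord_nodup σ)
        ((avoids_iff σ).mp h)).symm
    · intro h
      refine (avoids_iff σ).mpr ?_
      rw [h]
      exact avoidsL_rpw _ (pspiles_inv (permWord_nodup σ))
  refine ⟨⟨fun h => ⟨σ, hfix.mp h⟩, ?_⟩, hfix⟩
  rintro ⟨τ, hτ⟩
  refine (avoids_iff σ).mpr ?_
  rw [hτ]
  exact avoidsL_rpw _ (pspiles_inv (permWord_nodup τ))
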